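/- Suppose the family Υ_n is admissible relative to the sets Ω(n,m) for G ↷ (X,ν). For each m there exists a constant C₁(m) > 0, independent of n, such that for all n > N(m) and all f ∈ L¹(ν×θ), the function X_{n,m}f lies in L¹(ν×θ) and ‖X_{n,m}f‖_{L¹(ν×θ)} ≤ C₁(m)‖f‖_{L¹(ν×θ)}. -/

import Mathlib

open MeasureTheory Filter Metric Set
open scoped ENNReal

namespace StableRatio

variable {G : Type*} [Group G] [Countable G]

/-- The Radon–Nikodym derivative `d(ν∘g)/dν`, where `(ν∘g)(A) = ν(gA)`,
so that `ν∘g` is the pushforward of `ν` under the action of `g⁻¹`. -/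
noncomputable def RN {Z : Type*} [MeasurableSpace Z] (act : G → Z → Z) (ν : Measure Z)
    (g : G) (z : Z) : ℝ :=
  ((ν.map (act g⁻¹)).rnDeriv ν z).toReal

/-- `R(g,η) = log (d(ν∘g)/dν)(η)`. -/
noncomputable def Rlog {Z : Type*} [MeasurableSpace Z] (act : G → Z → Z) (ν : Measure Z)
    (g : G) (z : Z) : ℝ :=
  Real.log (RN act ν g z)

/-- A family of functions `Υ n : G → Z → Z → ℝ` is admissible relative to a family of
closed subsets `Ω n m ⊆ Z`, with constants `D C : ℕ → ℝ`, `N : ℕ → ℕ` and moduli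
`fbd : ℕ → ℕ → ℝ`.  Here `dZ` is the metric on `Z` and `act` the (quasi-invariant)
action of `G` on `(Z,ν)`. -/
structure IsRelAdmissible {Z : Type*} [MeasurableSpace Z] [TopologicalSpace Z]
    (act : G → Z → Z) (dZ : Z → Z → ℝ) (ν : Measure Z) [SFinite ν]
    (Υ : ℕ → G → Z → Z → ℝ) (Ω : ℕ → ℕ → Set Z)
    (D C : ℕ → ℝ) (N : ℕ → ℕ) (fbd : ℕ → ℕ → ℝ) : Prop where
  meas_Υ : ∀ (n : ℕ) (g : G), Measurable (Function.uncurry (Υ n g))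
  nonneg_Υ : ∀ (n : ℕ) (g : G) (b b' : Z), 0 ≤ Υ n g b b'
  closed_Ω : ∀ n m : ℕ, IsClosed (Ω n m)
  D_pos : ∀ m : ℕ, 0 < D m
  D_lim : Tendsto D atTop (nhds 0)
  Ω_big : ∀ n m : ℕ, ENNReal.ofReal (1 - D m) < ν (Ω n m)
  f_lim : ∀ m : ℕ, Tendsto (fbd m) atTop (nhds 0)
  close : ∀ (n m : ℕ) (g : G) (b b' : Z), b ∈ Ω n m → 0 < Υ n g b b' →
    dZ b b' < fbd m n ∧ dZ (act g⁻¹ b) (act g⁻¹ b') < fbd m n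
  C_pos : ∀ m : ℕ, 0 < C m
  N_pos : ∀ m : ℕ, 0 < N m
  R_bound : ∀ (m n : ℕ), N m < n → ∀ g : G, ∀ᵐ p ∂(ν.prod ν),
    p.1 ∈ Ω n m → 0 < Υ n g p.1 p.2 →
      (|Rlog act ν g⁻¹ p.1| + |Rlog act ν g⁻¹ p.2| < C m ∧
        1 / C m ≤ |Rlog act ν g⁻¹ p.1 - Rlog act ν g⁻¹ p.2|)
  normalized : ∀ (n : ℕ) (b : Z),
    (∑' g : G, ∫⁻ b', ENNReal.ofReal (Υ n g b b') ∂ν) = 1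
  bdd₁ : ∀ (m n : ℕ), N m < n → ∀ᵐ b' ∂ν,
    (∫⁻ b in Ω n m, ∑' g : G, ENNReal.ofReal (Υ n g b b') ∂ν) ≤ ENNReal.ofReal (C m)
  bdd₂ : ∀ (m n : ℕ), N m < n → ∀ᵐ b' ∂ν,
    (∫⁻ b in Ω n m, ∑' g : G, ENNReal.ofReal (Υ n g b (act g b') * RN act ν g b') ∂ν)
      ≤ ENNReal.ofReal (C m)
  bdd₃ : ∀ (m n : ℕ), N m < n → ∀ᵐ b ∂ν,
    (∫⁻ b', ∑' g : G, Set.indicator (Ω n m) (fun _ => (1 : ℝ≥0∞)) (act g b)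
        * ENNReal.ofReal (Υ n g (act g b) b' * RN act ν g b') ∂ν) ≤ ENNReal.ofReal (C m)

/-- The measure `θ` on `ℝ` with `dθ = (1/2) e^{-|t|} dt`. -/
noncomputable def theta : Measure ℝ :=
  MeasureTheory.volume.withDensity (fun t : ℝ => ENNReal.ofReal ((1 / 2) * Real.exp (-|t|)))

instance : SFinite theta := by unfold theta; infer_instance

/-- The measure `ζ_{n,m}` on `ℝ`:
`ζ_{n,m}(E) = Σ_{g∈G} ∫∫ 1_E(R(g⁻¹,b') − R(g⁻¹,b)) 1_{Ω(n,m)}(b) Υ_n(g,b,b') dν(b) dν(b')`. -/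
noncomputable def zeta {Z : Type*} [MeasurableSpace Z] (act : G → Z → Z) (ν : Measure Z)
    [SFinite ν] (Υ : ℕ → G → Z → Z → ℝ) (Ω : ℕ → ℕ → Set Z) (n m : ℕ) : Measure ℝ :=
  Measure.sum fun g : G =>
    ((ν.prod ν).withDensity fun p =>
        Set.indicator (Ω n m) (fun _ => (1 : ℝ≥0∞)) p.1 * ENNReal.ofReal (Υ n g p.1 p.2)).map
      fun p => Rlog act ν g⁻¹ p.2 - Rlog act ν g⁻¹ p.1

/-- The measure `ζ_{n,b}` on `ℝ`:
`ζ_{n,b}(E) = Σ_{g∈G} ∫ 1_E(R(g⁻¹,b') − R(g⁻¹,b)) Υ_n(g,b,b') dν(b')`. -/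
noncomputable def zetaB {Z : Type*} [MeasurableSpace Z] (act : G → Z → Z) (ν : Measure Z)
    (Υ : ℕ → G → Z → Z → ℝ) (n : ℕ) (b : Z) : Measure ℝ :=
  Measure.sum fun g : G =>
    (ν.withDensity fun b' => ENNReal.ofReal (Υ n g b b')).map
      fun b' => Rlog act ν g⁻¹ b' - Rlog act ν g⁻¹ b

/-- `μ` is a weak-* limit point of the sequence `μs`, i.e. the limit of some subsequence
in the weak-* topology (integration against bounded continuous functions). -/
def WeakStarLimitPoint (μs : ℕ → Measure ℝ) (μ : Measure ℝ) : Prop :=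
  ∃ φ : ℕ → ℕ, StrictMono φ ∧
    ∀ f : BoundedContinuousFunction ℝ ℝ,
      Tendsto (fun k => ∫ x, f x ∂(μs (φ k))) atTop (nhds (∫ x, f x ∂μ))

/-- `T` belongs to the (topological) support of the measure `μ` on `ℝ`. -/
def MemSupport (μ : Measure ℝ) (T : ℝ) : Prop :=
  ∀ ε : ℝ, 0 < ε → 0 < μ (Metric.ball T ε)

/-- `r` belongs to the ratio set of the action `act` of `G` on `(Z,μ)`. -/
def InRatioSet {Z : Type*} [MeasurableSpace Z] (act : G → Z → Z) (μ : Measure Z)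
    (r : ℝ) : Prop :=
  ∀ A : Set Z, MeasurableSet A → 0 < μ A → ∀ ε : ℝ, 0 < ε →
    ∃ A' : Set Z, MeasurableSet A' ∧ A' ⊆ A ∧ 0 < μ A' ∧
      ∃ g : G, g ≠ 1 ∧ act g '' A' ⊆ A ∧ ∀ b ∈ A', |RN act μ g b - r| ≤ ε

/-- `r` belongs to the stable ratio set of the action `act` of `G` on `(Z,ν)`:
`r` is in the ratio set of the product of the action with every probability
measure preserving action of `G`. -/
def InStableRatioSet {Z : Type*} [MeasurableSpace Z] (act : G → Z → Z) (ν : Measure Z)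
    [SFinite ν] (r : ℝ) : Prop :=
  ∀ (Y : Type) [MeasurableSpace Y] (κ : Measure Y) [IsProbabilityMeasure κ]
    (aY : G → Y → Y),
    (∀ g : G, Measurable (aY g)) → aY 1 = id →
    (∀ g h : G, aY (g * h) = aY g ∘ aY h) →
    (∀ g : G, κ.map (aY g) = κ) →
    InRatioSet (fun g (p : Z × Y) => (act g p.1, aY g p.2)) (ν.prod κ) r

/-- The operator `W_{n,m}`. -/
noncomputable def Wop {Z : Type*} [MeasurableSpace Z] (ν : Measure Z)
    (Υ : ℕ → G → Z → Z → ℝ) (Ω : ℕ → ℕ → Set Z) (n m : ℕ)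
    (f : Z → ℝ → ℝ) (b : Z) (t : ℝ) : ℝ :=
  ∑' g : G, ∫ b', Set.indicator (Ω n m) (fun _ => (1 : ℝ)) b * Υ n g b b' * f b' t ∂ν

/-- The operator `X_{n,m}`. -/
noncomputable def Xop {Z : Type*} [MeasurableSpace Z] (act : G → Z → Z) (ν : Measure Z)
    (Υ : ℕ → G → Z → Z → ℝ) (Ω : ℕ → ℕ → Set Z) (n m : ℕ)
    (f : Z → ℝ → ℝ) (b : Z) (t : ℝ) : ℝ :=
  ∑' g : G, ∫ b', Set.indicator (Ω n m) (fun _ => (1 : ℝ)) b * Υ n g b b' *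
      f (act g⁻¹ b') (t + Rlog act ν g⁻¹ b') ∂ν

/-- The operator `Y_{n,m}`. -/
noncomputable def Yop {Z : Type*} [MeasurableSpace Z] (act : G → Z → Z) (ν : Measure Z)
    (Υ : ℕ → G → Z → Z → ℝ) (Ω : ℕ → ℕ → Set Z) (n m : ℕ)
    (f : Z → ℝ → ℝ) (b : Z) (t : ℝ) : ℝ :=
  ∑' g : G, ∫ b', Set.indicator (Ω n m) (fun _ => (1 : ℝ)) b * Υ n g b b' *
      f (act g⁻¹ b) (t + Rlog act ν g⁻¹ b') ∂ν

/-- The operator `L_{n,m}`. -/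
noncomputable def Lop {Z : Type*} [MeasurableSpace Z] (act : G → Z → Z) (ν : Measure Z)
    (Υ : ℕ → G → Z → Z → ℝ) (Ω : ℕ → ℕ → Set Z) (n m : ℕ)
    (f : Z → ℝ → ℝ) (b : Z) (t : ℝ) : ℝ :=
  ∑' g : G, ∫ b', Set.indicator (Ω n m) (fun _ => (1 : ℝ)) b * Υ n g b b' *
      f b (t + Rlog act ν g⁻¹ b' - Rlog act ν g⁻¹ b) ∂ν

private lemma ofReal_abs_tsum_le {ι : Type*} [Countable ι] (a : ι → ℝ) :
    ENNReal.ofReal |∑' i, a i| ≤ ∑' i, ENNReal.ofReal |a i| := by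
  by_cases h : Summable a
  · have h1 : ENNReal.ofReal |∑' i, a i| ≤ ENNReal.ofReal (∑' i, |a i|) := by
      apply ENNReal.ofReal_le_ofReal
      simpa [Real.norm_eq_abs] using
        norm_tsum_le_tsum_norm (f := a) (by simpa [Real.norm_eq_abs] using h.abs)
    rw [ENNReal.ofReal_tsum_of_nonneg (fun i => abs_nonneg _) h.abs] at h1
    exact h1
  · simp [tsum_eq_zero_of_not_summable h]

private lemma ofReal_abs_integral_le {α : Type*} [MeasurableSpace α] (μ : Measure α)
    (h : α → ℝ) : ENNReal.ofReal |∫ x, h x ∂μ| ≤ ∫⁻ x, ENNReal.ofReal |h x| ∂μ := by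
  simp_rw [← Real.norm_eq_abs, ofReal_norm]
  exact enorm_integral_le_lintegral_enorm _

private lemma theta_density_meas :
    Measurable (fun t : ℝ => ENNReal.ofReal ((1 / 2) * Real.exp (-|t|))) := by
  fun_prop

private lemma vol_null_of_theta_null {A : Set ℝ} (hA : MeasurableSet A)
    (h : theta A = 0) : MeasureTheory.volume A = 0 := by
  rw [theta, withDensity_apply _ hA] at h
  rw [lintegral_eq_zero_iff theta_density_meas] at h
  by_contra hvol
  have : (volume.restrict A) {t : ℝ | ENNReal.ofReal ((1/2) * Real.exp (-|t|)) ≠ 0} = 0 := by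
    simpa [Filter.EventuallyEq, ae_iff] using h
  have huniv : {t : ℝ | ENNReal.ofReal ((1/2) * Real.exp (-|t|)) ≠ 0} = Set.univ := by
    ext t
    simp only [Set.mem_setOf_eq, Set.mem_univ, iff_true, ne_eq]
    positivity
  rw [huniv, Measure.restrict_apply_univ] at this
  exact hvol this

private lemma theta_shift (h : ℝ → ℝ≥0∞) (hh : Measurable h) (s : ℝ) :
    ∫⁻ t, h (t + s) ∂theta
      ≤ ENNReal.ofReal (Real.exp |s|) * ∫⁻ t, h t ∂theta := by
  rw [theta, lintegral_withDensity_eq_lintegral_mul _ theta_density_meas (by fun_prop),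
    lintegral_withDensity_eq_lintegral_mul _ theta_density_meas hh]
  have key : ∫⁻ t, (fun t => ENNReal.ofReal ((1 / 2) * Real.exp (-|t|)) * h (t + s)) t ∂volume
      = ∫⁻ u, ENNReal.ofReal ((1 / 2) * Real.exp (-|u - s|)) * h u ∂volume := by
    have := lintegral_add_right_eq_self (μ := volume)
      (fun u => ENNReal.ofReal ((1 / 2) * Real.exp (-|u - s|)) * h u) s
    simp only [add_sub_cancel_right] at this
    exact this
  simp only [Pi.mul_apply]
  rw [key, ← lintegral_const_mul' _ _ ENNReal.ofReal_ne_top]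
  apply lintegral_mono
  intro u
  simp only []
  rw [← mul_assoc, ← ENNReal.ofReal_mul (Real.exp_nonneg _)]
  apply mul_le_mul_left
  apply ENNReal.ofReal_le_ofReal
  rw [mul_comm (Real.exp |s|), mul_assoc, ← Real.exp_add]
  have h2 : -|u - s| ≤ -|u| + |s| := by
    have := abs_sub_abs_le_abs_sub u (u - s)
    simp only [sub_sub_cancel] at this
    linarith
  nlinarith [Real.exp_le_exp.mpr h2, Real.exp_pos (-|u - s|), Real.exp_pos (-|u| + |s|)]
theorem stmt3 {G X : Type*} [Group G] [Countable G]
    [MetricSpace X] [CompactSpace X] [MeasurableSpace X] [BorelSpace X]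
    (act : G → X → X) (hact_one : act 1 = id)
    (hact_mul : ∀ g h : G, act (g * h) = act g ∘ act h)
    (hact_meas : ∀ g : G, Measurable (act g))
    (ν : Measure X) [IsProbabilityMeasure ν]
    (hqi : ∀ g : G, ν.map (act g) ≪ ν ∧ ν ≪ ν.map (act g))
    (Υ : ℕ → G → X → X → ℝ) (Ω : ℕ → ℕ → Set X)
    (D C : ℕ → ℝ) (N : ℕ → ℕ) (fbd : ℕ → ℕ → ℝ)
    (hadm : IsRelAdmissible act (fun a b : X => dist a b) ν Υ Ω D C N fbd) :
    ∀ m : ℕ, ∃ C₁ : ℝ, 0 < C₁ ∧ ∀ n : ℕ, N m < n → ∀ f : X × ℝ → ℝ,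
      Integrable f (ν.prod theta) →
      Integrable (fun p : X × ℝ => Xop act ν Υ Ω n m (Function.curry f) p.1 p.2)
          (ν.prod theta) ∧
        ∫ p, |Xop act ν Υ Ω n m (Function.curry f) p.1 p.2| ∂(ν.prod theta)
          ≤ C₁ * ∫ p, |f p| ∂(ν.prod theta) := by
  intro m
  have hCm : 0 < C m := hadm.C_pos m
  refine ⟨Real.exp (C m) * C m, by positivity, ?_⟩
  intro n hn f hf
  -- group action facts
  have hinv : ∀ (g : G) (x : X), act g (act g⁻¹ x) = x := by
    intro g x
    have h1 := congrFun (hact_mul g g⁻¹) x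
    rw [mul_inv_cancel, hact_one] at h1
    exact h1.symm
  -- measurability of Rlog
  have hRlog : ∀ h : G, Measurable (Rlog act ν h) := fun h =>
    Real.measurable_log.comp (Measure.measurable_rnDeriv _ _).ennreal_toReal
  -- measurable representative of f
  set f₀ : X × ℝ → ℝ := hf.1.mk f with hf₀def
  have hf₀meas : Measurable f₀ := hf.1.stronglyMeasurable_mk.measurable
  have hff₀ : f =ᵐ[ν.prod theta] f₀ := hf.1.ae_eq_mk
  -- notation
  set I : X → ℝ≥0∞ := fun b => Set.indicator (Ω n m) (fun _ => (1:ℝ≥0∞)) b with hIdef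
  have hImeas : Measurable I := measurable_one.indicator (hadm.closed_Ω n m).measurableSet
  have hIle : ∀ b, I b ≤ 1 := by
    intro b
    by_cases hb : b ∈ Ω n m <;> simp [hIdef, hb]
  set U : G → X → X → ℝ≥0∞ := fun g b b' => ENNReal.ofReal (Υ n g b b') with hUdef
  have hUmeas : ∀ g, Measurable (fun q : X × X => U g q.1 q.2) := fun g =>
    ENNReal.measurable_ofReal.comp (hadm.meas_Υ n g)
  set Rl : G → X → ℝ := fun g b' => Rlog act ν g⁻¹ b' with hRldef
  set F : X × ℝ → ℝ≥0∞ := fun q => ENNReal.ofReal |f₀ q| with hFdef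
  have hFmeas : Measurable F := ENNReal.measurable_ofReal.comp hf₀meas.abs
  set Φ : G → X × ℝ → X × ℝ := fun g q => (act g⁻¹ q.1, q.2 + Rl g q.1) with hΦdef
  have hΦmeas : ∀ g, Measurable (Φ g) := fun g =>
    ((hact_meas g⁻¹).comp measurable_fst).prodMk
      (measurable_snd.add ((hRlog g⁻¹).comp measurable_fst))
  set A : G → X × ℝ → ℝ := fun g p => ∫ b',
      Set.indicator (Ω n m) (fun _ => (1:ℝ)) p.1 * Υ n g p.1 b' * f₀ (Φ g (b', p.2)) ∂ν
    with hAdef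
  set K : G → X × ℝ → ℝ≥0∞ := fun g p => ∫⁻ b', I p.1 * U g p.1 b' * F (Φ g (b', p.2)) ∂ν
    with hKdef
  set H : X → ℝ≥0∞ := fun c => ∫⁻ t, F (c, t) ∂theta with hHdef
  set Lf : ℝ≥0∞ := ∫⁻ q, F q ∂(ν.prod theta) with hLfdef
  -- measurability of the building blocks
  have hKint : ∀ g, Measurable (fun q : (X × ℝ) × X => I q.1.1 * U g q.1.1 q.2
      * F (Φ g (q.2, q.1.2))) := by
    intro g
    apply Measurable.mul
    · exact (hImeas.comp (measurable_fst.comp measurable_fst)).mul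
        ((hUmeas g).comp ((measurable_fst.comp measurable_fst).prodMk measurable_snd))
    · exact (hFmeas.comp (hΦmeas g)).comp (measurable_snd.prodMk
        (measurable_snd.comp measurable_fst))
  have hKmeas : ∀ g, Measurable (K g) := by
    intro g
    exact (hKint g).lintegral_prod_right'
  have hAsm : ∀ g, StronglyMeasurable (A g) := by
    intro g
    apply StronglyMeasurable.integral_prod_right' (f := fun q : (X × ℝ) × X =>
      Set.indicator (Ω n m) (fun _ => (1:ℝ)) q.1.1 * Υ n g q.1.1 q.2 * f₀ (Φ g (q.2, q.1.2)))
    apply Measurable.stronglyMeasurable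
    apply Measurable.mul
    · apply Measurable.mul
      · exact (measurable_one.indicator (hadm.closed_Ω n m).measurableSet).comp
          (measurable_fst.comp measurable_fst)
      · exact (hadm.meas_Υ n g).comp
          ((measurable_fst.comp measurable_fst).prodMk measurable_snd)
    · exact (hf₀meas.comp (hΦmeas g)).comp (measurable_snd.prodMk
        (measurable_snd.comp measurable_fst))
  have hAK : ∀ g p, ENNReal.ofReal |A g p| ≤ K g p := by
    intro g p
    refine le_trans (ofReal_abs_integral_le ν _) (le_of_eq (lintegral_congr fun b' => ?_))
    have hind : (0:ℝ) ≤ Set.indicator (Ω n m) (fun _ => (1:ℝ)) p.1 :=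
      Set.indicator_nonneg (fun _ _ => zero_le_one) _
    have h1 : |Set.indicator (Ω n m) (fun _ => (1:ℝ)) p.1 * Υ n g p.1 b' * f₀ (Φ g (b', p.2))|
        = Set.indicator (Ω n m) (fun _ => (1:ℝ)) p.1 * Υ n g p.1 b'
            * |f₀ (Φ g (b', p.2))| := by
      rw [abs_mul, abs_mul, abs_of_nonneg (hadm.nonneg_Υ n g _ _), abs_of_nonneg hind]
    rw [h1, ENNReal.ofReal_mul (mul_nonneg hind (hadm.nonneg_Υ n g _ _)),
      ENNReal.ofReal_mul hind]
    congr 1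
    congr 1
    by_cases hb : p.1 ∈ Ω n m <;> simp [hIdef, hb]
  have hXeq : (fun p : X × ℝ => Xop act ν Υ Ω n m (Function.curry f) p.1 p.2)
      =ᵐ[ν.prod theta] fun p => ∑' g : G, A g p := by
    obtain ⟨S, hSsub, hSmeas, hS0⟩ := exists_measurable_superset_of_null (ae_iff.1 hff₀)
    have hfS : ∀ q : X × ℝ, q ∉ S → f q = f₀ q := by
      intro q hq
      by_contra hne
      exact hq (hSsub hne)
    have hsub : ∀ g : G, ∀ᵐ t ∂theta, ∀ᵐ b' ∂ν, f (Φ g (b', t)) = f₀ (Φ g (b', t)) := by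
      intro g
      -- slices of S are volume-null a.e.
      have hSnull : (ν.prod theta) S = 0 := hS0
      rw [Measure.prod_apply hSmeas] at hSnull
      have hslice : ∀ᵐ c ∂ν, theta (Prod.mk c ⁻¹' S) = 0 := by
        rwa [lintegral_eq_zero_iff (measurable_measure_prodMk_left hSmeas)] at hSnull
      have hvol : ∀ᵐ c ∂ν, volume (Prod.mk c ⁻¹' S) = 0 :=
        hslice.mono fun c hc => vol_null_of_theta_null (measurable_prodMk_left hSmeas) hc
      set Z := {c : X | volume (Prod.mk c ⁻¹' S) = 0} with hZdef
      have hZmeas : MeasurableSet Z :=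
        (measurable_measure_prodMk_left hSmeas) (measurableSet_singleton 0)
      have hZc : ν Zᶜ = 0 := by
        rw [ae_iff] at hvol
        simpa [hZdef, Set.compl_setOf] using hvol
      have hZg : ∀ᵐ b' ∂ν, act g⁻¹ b' ∈ Z := by
        have hmap : (ν.map (act g⁻¹)) Zᶜ = 0 := (hqi g⁻¹).1 hZc
        rw [Measure.map_apply (hact_meas g⁻¹) hZmeas.compl] at hmap
        rw [ae_iff]
        exact hmap
      -- the preimage of S under Φ g is null
      have hpre : (ν.prod theta) (Φ g ⁻¹' S) = 0 := by
        rw [Measure.prod_apply ((hΦmeas g) hSmeas)]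
        have : ∀ᵐ b' ∂ν, theta (Prod.mk b' ⁻¹' (Φ g ⁻¹' S)) = 0 := by
          filter_upwards [hZg] with b' hb'
          have hset : Prod.mk b' ⁻¹' (Φ g ⁻¹' S)
              = (fun t => t + Rl g b') ⁻¹' (Prod.mk (act g⁻¹ b') ⁻¹' S) := rfl
          rw [hset]
          have hvol0 : volume ((fun t => t + Rl g b') ⁻¹' (Prod.mk (act g⁻¹ b') ⁻¹' S)) = 0 := by
            rw [measure_preimage_add_right]
            exact hb'
          exact (withDensity_absolutelyContinuous _ _) hvol0
        rw [lintegral_congr_ae this, lintegral_zero]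
      -- swap the order of integration for the null set
      have hswapnull : (theta.prod ν) (Prod.swap ⁻¹' (Φ g ⁻¹' S)) = 0 := by
        rw [← Measure.prod_swap, Measure.map_apply measurable_swap
          (measurable_swap ((hΦmeas g) hSmeas))]
        simpa [Set.preimage_preimage] using hpre
      have hae : ∀ᵐ r ∂(theta.prod ν), r ∉ Prod.swap ⁻¹' (Φ g ⁻¹' S) := by
        rw [ae_iff]
        simp only [not_not]
        exact hswapnull
      have := Measure.ae_ae_of_ae_prod hae
      filter_upwards [this] with t ht
      filter_upwards [ht] with b' hb'
      exact hfS _ hb'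
    have hae2 : ∀ᵐ t ∂theta, ∀ g : G, ∀ᵐ b' ∂ν, f (Φ g (b', t)) = f₀ (Φ g (b', t)) :=
      ae_all_iff.2 hsub
    have hae3 := (Measure.quasiMeasurePreserving_snd (μ := ν) (ν := theta)).ae hae2
    filter_upwards [hae3] with p hp
    rw [Xop]
    apply tsum_congr
    intro g
    apply integral_congr_ae
    filter_upwards [hp g] with b' hb'
    simp only [Function.curry_apply]
    rw [show ((act g⁻¹ b' : X), p.2 + Rlog act ν g⁻¹ b') = Φ g (b', p.2) from rfl, hb']
  have hLf_eq : ∫⁻ q, ENNReal.ofReal |f q| ∂(ν.prod theta) = Lf := by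
    apply lintegral_congr_ae
    filter_upwards [hff₀] with q hq
    rw [hFdef, hq]
  have hLf_lt : Lf < ∞ := by
    rw [← hLf_eq]
    simpa [← Real.norm_eq_abs, ofReal_norm] using hasFiniteIntegral_iff_enorm.1 hf.2
  have hcore : ∑' g : G, ∫⁻ p, K g p ∂(ν.prod theta)
      ≤ ENNReal.ofReal (Real.exp (C m) * C m) * Lf := by
    set E : ℝ≥0∞ := ENNReal.ofReal (Real.exp (C m)) with hEdef
    have hprob : ∀ g : G, IsProbabilityMeasure (ν.map (act g)) := fun g =>
      Measure.isProbabilityMeasure_map (hact_meas g).aemeasurable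
    set ρ : G → X → ℝ≥0∞ := fun g => (ν.map (act g⁻¹)).rnDeriv ν with hρdef
    have hρmeas : ∀ g : G, Measurable (ρ g) := fun g => Measure.measurable_rnDeriv _ _
    set Tg : G → X → ℝ≥0∞ := fun g b' => ∫⁻ t, F (Φ g (b', t)) ∂theta with hTgdef
    have hTgmeas : ∀ g : G, Measurable (Tg g) := fun g =>
      (hFmeas.comp (hΦmeas g)).lintegral_prod_right'
    have hHmeas : Measurable H := hFmeas.lintegral_prod_right'
    have hHint : ∫⁻ c, H c ∂ν = Lf := (lintegral_prod _ hFmeas.aemeasurable).symm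
    have hIne : ∀ b, I b ≠ ∞ := fun b => ne_top_of_le_ne_top ENNReal.one_ne_top (hIle b)
    have hIUne : ∀ g b b', I b * U g b b' ≠ ∞ := fun g b b' =>
      ENNReal.mul_ne_top (hIne b) ENNReal.ofReal_ne_top
    -- Step 1 : Tonelli in t
    have hmeasZT : ∀ g : G, Measurable fun z : X × X => I z.1 * U g z.1 z.2 * Tg g z.2 :=
      fun g => ((hImeas.comp measurable_fst).mul (hUmeas g)).mul
        ((hTgmeas g).comp measurable_snd)
    have step1 : ∀ g : G, ∫⁻ p, K g p ∂(ν.prod theta)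
        = ∫⁻ z, I z.1 * U g z.1 z.2 * Tg g z.2 ∂(ν.prod ν) := by
      intro g
      rw [lintegral_prod _ (hKmeas g).aemeasurable,
        lintegral_prod _ (hmeasZT g).aemeasurable]
      apply lintegral_congr
      intro b
      have hswap := lintegral_lintegral_swap (μ := theta) (ν := ν)
        (f := fun t b' => I b * U g b b' * F (Φ g (b', t)))
        (by
          apply AEMeasurable.mul
          · exact ((measurable_const.mul ((hUmeas g).comp
              (measurable_const.prodMk measurable_snd)))).aemeasurable
          · exact ((hFmeas.comp (hΦmeas g)).comp
              (measurable_snd.prodMk measurable_fst)).aemeasurable)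
      rw [hswap]
      apply lintegral_congr
      intro b'
      exact lintegral_const_mul' _ _ (hIUne g b b')
    -- Step 2 : a.e. bound on the Radon-Nikodym shift
    have hmeasZH : ∀ g : G, Measurable fun z : X × X => I z.1 * U g z.1 z.2
        * H (act g⁻¹ z.2) := fun g => ((hImeas.comp measurable_fst).mul (hUmeas g)).mul
        ((hHmeas.comp (hact_meas g⁻¹)).comp measurable_snd)
    have step2 : ∀ g : G, ∫⁻ z, I z.1 * U g z.1 z.2 * Tg g z.2 ∂(ν.prod ν)
        ≤ E * ∫⁻ z, I z.1 * U g z.1 z.2 * H (act g⁻¹ z.2) ∂(ν.prod ν) := by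
      intro g
      rw [← lintegral_const_mul' E _ ENNReal.ofReal_ne_top]
      apply lintegral_mono_ae
      filter_upwards [hadm.R_bound m n hn g] with z hz
      by_cases hΩ : z.1 ∈ Ω n m
      swap
      · simp [hIdef, Set.indicator_of_notMem hΩ]
      by_cases hU : 0 < Υ n g z.1 z.2
      swap
      · have h0 : Υ n g z.1 z.2 = 0 := le_antisymm (not_lt.1 hU) (hadm.nonneg_Υ n g _ _)
        simp [hUdef, h0]
      obtain ⟨hR1, _⟩ := hz hΩ hU
      have hRb : |Rl g z.2| ≤ C m := by
        have h1 := abs_nonneg (Rlog act ν g⁻¹ z.1)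
        rw [hRldef]
        dsimp only
        linarith
      have hT : Tg g z.2 ≤ E * H (act g⁻¹ z.2) := by
        have hshift := theta_shift (fun t => F (act g⁻¹ z.2, t))
          (hFmeas.comp (measurable_const.prodMk measurable_id)) (Rl g z.2)
        refine le_trans hshift (mul_le_mul_left
          (ENNReal.ofReal_le_ofReal (Real.exp_le_exp.2 hRb)) _)
      calc I z.1 * U g z.1 z.2 * Tg g z.2
          ≤ I z.1 * U g z.1 z.2 * (E * H (act g⁻¹ z.2)) := mul_le_mul_right hT _
        _ = E * (I z.1 * U g z.1 z.2 * H (act g⁻¹ z.2)) := by ring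
    -- Step 3 : change of variables b' = act g c
    have hcvar : ∀ (g : G) (φ : X → ℝ≥0∞), Measurable φ →
        ∫⁻ b', φ (act g⁻¹ b') ∂ν = ∫⁻ c, φ c * ρ g c ∂ν := by
      intro g φ hφ
      haveI := hprob g⁻¹
      rw [← lintegral_map hφ (hact_meas g⁻¹)]
      conv_lhs => rw [← Measure.withDensity_rnDeriv_eq _ _ ((hqi g⁻¹).1)]
      rw [lintegral_withDensity_eq_lintegral_mul _ (Measure.measurable_rnDeriv _ _) hφ]
      exact lintegral_congr fun c => mul_comm _ _
    set Q : G → X → ℝ≥0∞ := fun g c => ∫⁻ b, I b * U g b (act g c) * H c * ρ g c ∂ν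
      with hQdef
    have hmeasψ : ∀ g : G, Measurable fun q : X × X =>
        I q.2 * U g q.2 (act g q.1) * H q.1 * ρ g q.1 := by
      intro g
      apply Measurable.mul
      · apply Measurable.mul
        · exact (hImeas.comp measurable_snd).mul ((hUmeas g).comp
            (measurable_snd.prodMk ((hact_meas g).comp measurable_fst)))
        · exact hHmeas.comp measurable_fst
      · exact (hρmeas g).comp measurable_fst
    have hQmeas : ∀ g : G, Measurable (Q g) := fun g => (hmeasψ g).lintegral_prod_right'
    have hmeasψ' : ∀ g : G, Measurable fun q : X × X =>
        I q.1 * U g q.1 (act g q.2) * H q.2 * ρ g q.2 := by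
      intro g
      apply Measurable.mul
      · apply Measurable.mul
        · exact (hImeas.comp measurable_fst).mul ((hUmeas g).comp
            (measurable_fst.prodMk ((hact_meas g).comp measurable_snd)))
        · exact hHmeas.comp measurable_snd
      · exact (hρmeas g).comp measurable_snd
    have step3 : ∀ g : G, ∫⁻ z, I z.1 * U g z.1 z.2 * H (act g⁻¹ z.2) ∂(ν.prod ν)
        = ∫⁻ c, Q g c ∂ν := by
      intro g
      rw [lintegral_prod _ (hmeasZH g).aemeasurable]
      have hb : ∀ b : X, ∫⁻ b', I b * U g b b' * H (act g⁻¹ b') ∂ν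
          = ∫⁻ c, I b * U g b (act g c) * H c * ρ g c ∂ν := by
        intro b
        have hφ : Measurable fun c => I b * U g b (act g c) * H c := by
          apply Measurable.mul
          · exact measurable_const.mul ((hUmeas g).comp
              (measurable_const.prodMk (hact_meas g)))
          · exact hHmeas
        have := hcvar g (fun c => I b * U g b (act g c) * H c) hφ
        rw [← this]
        apply lintegral_congr
        intro b'
        show I b * U g b b' * H (act g⁻¹ b')
          = I b * U g b (act g (act g⁻¹ b')) * H (act g⁻¹ b')
        rw [hinv g b']
      rw [lintegral_congr hb]
      exact lintegral_lintegral_swap (hmeasψ' g).aemeasurable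
    -- Step 4 : the a.e. bound from bdd₂
    have hρfin : ∀ g : G, ∀ᵐ c ∂ν, ρ g c < ∞ := by
      intro g
      haveI := hprob g⁻¹
      exact Measure.rnDeriv_lt_top _ _
    have hHfin : ∀ᵐ c ∂ν, H c < ∞ := ae_lt_top hHmeas (by rw [hHint]; exact hLf_lt.ne)
    have hae : ∀ᵐ c ∂ν, ∑' g : G, Q g c ≤ ENNReal.ofReal (C m) * H c := by
      filter_upwards [ae_all_iff.2 hρfin, hHfin, hadm.bdd₂ m n hn] with c hρc hHc hb2
      have hQ : ∀ g : G, Q g c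
          = (∫⁻ b, I b * ENNReal.ofReal (Υ n g b (act g c) * RN act ν g c) ∂ν) * H c := by
        intro g
        rw [hQdef]
        dsimp only
        rw [← lintegral_mul_const' _ _ hHc.ne]
        apply lintegral_congr
        intro b
        have hρ : ρ g c = ENNReal.ofReal (RN act ν g c) := by
          rw [show RN act ν g c = (ρ g c).toReal from rfl]
          exact (ENNReal.ofReal_toReal (hρc g).ne).symm
        rw [ENNReal.ofReal_mul (hadm.nonneg_Υ n g _ _), hρ]
        ring
      have hinmeas : ∀ g : G, Measurable fun b =>
          I b * ENNReal.ofReal (Υ n g b (act g c) * RN act ν g c) := by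
        intro g
        apply hImeas.mul
        apply ENNReal.measurable_ofReal.comp
        exact ((hadm.meas_Υ n g).comp (measurable_id.prodMk measurable_const)).mul
          measurable_const
      calc ∑' g : G, Q g c
          = (∑' g : G, ∫⁻ b, I b
              * ENNReal.ofReal (Υ n g b (act g c) * RN act ν g c) ∂ν) * H c := by
            rw [← ENNReal.tsum_mul_right]
            exact tsum_congr hQ
        _ ≤ ENNReal.ofReal (C m) * H c := by
            apply mul_le_mul_left
            calc ∑' g : G, ∫⁻ b, I b * ENNReal.ofReal (Υ n g b (act g c) * RN act ν g c) ∂ν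
                = ∫⁻ b, ∑' g : G, I b
                    * ENNReal.ofReal (Υ n g b (act g c) * RN act ν g c) ∂ν :=
                  (lintegral_tsum fun g => (hinmeas g).aemeasurable).symm
              _ = ∫⁻ b in Ω n m, ∑' g : G,
                    ENNReal.ofReal (Υ n g b (act g c) * RN act ν g c) ∂ν := by
                  rw [← lintegral_indicator (hadm.closed_Ω n m).measurableSet]
                  apply lintegral_congr
                  intro b
                  rw [ENNReal.tsum_mul_left]
                  by_cases hb : b ∈ Ω n m <;>
                    simp [hIdef, Set.indicator_of_mem, Set.indicator_of_notMem, hb]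
              _ ≤ ENNReal.ofReal (C m) := hb2
    -- Assemble
    calc ∑' g : G, ∫⁻ p, K g p ∂(ν.prod theta)
        ≤ ∑' g : G, E * ∫⁻ z, I z.1 * U g z.1 z.2 * H (act g⁻¹ z.2) ∂(ν.prod ν) := by
          refine ENNReal.tsum_le_tsum fun g => ?_
          rw [step1 g]
          exact step2 g
      _ = E * ∑' g : G, ∫⁻ c, Q g c ∂ν := by
          rw [ENNReal.tsum_mul_left]
          congr 1
          exact tsum_congr step3
      _ = E * ∫⁻ c, ∑' g : G, Q g c ∂ν := by
          rw [lintegral_tsum fun g => (hQmeas g).aemeasurable]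
      _ ≤ E * ∫⁻ c, ENNReal.ofReal (C m) * H c ∂ν :=
          mul_le_mul_right (lintegral_mono_ae hae) _
      _ = E * (ENNReal.ofReal (C m) * Lf) := by
          rw [lintegral_const_mul' _ _ ENNReal.ofReal_ne_top, hHint]
      _ = ENNReal.ofReal (Real.exp (C m) * C m) * Lf := by
          rw [ENNReal.ofReal_mul (Real.exp_nonneg _), hEdef, mul_assoc]
  have hXle : ∫⁻ p, ENNReal.ofReal |Xop act ν Υ Ω n m (Function.curry f) p.1 p.2|
      ∂(ν.prod theta) ≤ ∑' g : G, ∫⁻ p, K g p ∂(ν.prod theta) := by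
    have h1 : ∫⁻ p, ENNReal.ofReal |Xop act ν Υ Ω n m (Function.curry f) p.1 p.2|
        ∂(ν.prod theta) = ∫⁻ p, ENNReal.ofReal |∑' g : G, A g p| ∂(ν.prod theta) := by
      apply lintegral_congr_ae
      filter_upwards [hXeq] with p hp
      rw [hp]
    rw [h1, ← lintegral_tsum (fun g => (hKmeas g).aemeasurable)]
    apply lintegral_mono
    intro p
    exact le_trans (ofReal_abs_tsum_le _) (ENNReal.tsum_le_tsum fun g => hAK g p)
  have htot : ∫⁻ p, ENNReal.ofReal |Xop act ν Υ Ω n m (Function.curry f) p.1 p.2|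
      ∂(ν.prod theta) ≤ ENNReal.ofReal (Real.exp (C m) * C m) * Lf :=
    le_trans hXle hcore
  have hfin : ENNReal.ofReal (Real.exp (C m) * C m) * Lf < ∞ :=
    ENNReal.mul_lt_top ENNReal.ofReal_lt_top hLf_lt
  -- a.e. strong measurability of the operator
  have haesm : AEStronglyMeasurable
      (fun p : X × ℝ => Xop act ν Υ Ω n m (Function.curry f) p.1 p.2) (ν.prod theta) := by
    have hAabs : ∀ g : G, Measurable fun p => ENNReal.ofReal |A g p| := fun g =>
      ENNReal.measurable_ofReal.comp (hAsm g).measurable.abs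
    have hsum_lt : ∫⁻ p, ∑' g : G, ENNReal.ofReal |A g p| ∂(ν.prod theta) < ∞ := by
      rw [lintegral_tsum (fun g => (hAabs g).aemeasurable)]
      exact lt_of_le_of_lt
        (ENNReal.tsum_le_tsum fun g => lintegral_mono fun p => hAK g p)
        (lt_of_le_of_lt hcore hfin)
    have haesum : ∀ᵐ p ∂(ν.prod theta), Summable fun g => A g p := by
      filter_upwards [ae_lt_top (Measurable.ennreal_tsum hAabs) hsum_lt.ne] with p hp
      have h1 : (∑' g : G, (‖A g p‖₊ : ℝ≥0∞)) ≠ ∞ := by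
        simpa [← enorm_eq_nnnorm, ← ofReal_norm, Real.norm_eq_abs] using hp.ne
      have h2 : Summable fun g => ‖A g p‖₊ := ENNReal.tsum_coe_ne_top_iff_summable.1 h1
      have h3 : Summable fun g => ‖A g p‖ := by
        have := NNReal.summable_coe.2 h2
        simpa [coe_nnnorm] using this
      exact h3.of_norm
    obtain ⟨u, hu⟩ := Filter.exists_seq_tendsto (atTop : Filter (Finset G))
    have hlim : AEStronglyMeasurable (fun p => ∑' g : G, A g p) (ν.prod theta) := by
      apply aestronglyMeasurable_of_tendsto_ae (atTop : Filter ℕ)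
        (f := fun k p => ∑ g ∈ u k, A g p)
        (fun k => Finset.aestronglyMeasurable_fun_sum _ fun g _ => (hAsm g).aestronglyMeasurable)
      filter_upwards [haesum] with p hp
      exact (hp.hasSum.comp hu)
    exact hlim.congr hXeq.symm
  have hint : Integrable (fun p : X × ℝ => Xop act ν Υ Ω n m (Function.curry f) p.1 p.2)
      (ν.prod theta) := by
    refine ⟨haesm, ?_⟩
    rw [HasFiniteIntegral]
    calc ∫⁻ p, ‖Xop act ν Υ Ω n m (Function.curry f) p.1 p.2‖₊ ∂(ν.prod theta)
        = ∫⁻ p, ENNReal.ofReal |Xop act ν Υ Ω n m (Function.curry f) p.1 p.2|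
            ∂(ν.prod theta) := by
          simp_rw [← Real.norm_eq_abs, ofReal_norm, enorm_eq_nnnorm]
      _ ≤ _ := htot
      _ < ∞ := hfin
  refine ⟨hint, ?_⟩
  have heq1 : ∫ p, |Xop act ν Υ Ω n m (Function.curry f) p.1 p.2| ∂(ν.prod theta)
      = (∫⁻ p, ENNReal.ofReal |Xop act ν Υ Ω n m (Function.curry f) p.1 p.2|
          ∂(ν.prod theta)).toReal := by
    rw [integral_eq_lintegral_of_nonneg_ae (Eventually.of_forall fun p => abs_nonneg _)
      (by simpa [Real.norm_eq_abs] using haesm.norm)]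
  have heq2 : ∫ p, |f p| ∂(ν.prod theta) = Lf.toReal := by
    rw [← hLf_eq, integral_eq_lintegral_of_nonneg_ae (Eventually.of_forall fun p => abs_nonneg _)
      (by simpa [Real.norm_eq_abs] using hf.1.norm)]
  rw [heq1, heq2]
  calc (∫⁻ p, ENNReal.ofReal |Xop act ν Υ Ω n m (Function.curry f) p.1 p.2|
        ∂(ν.prod theta)).toReal
      ≤ (ENNReal.ofReal (Real.exp (C m) * C m) * Lf).toReal :=
        ENNReal.toReal_mono hfin.ne htot
    _ = Real.exp (C m) * C m * Lf.toReal := by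
        rw [ENNReal.toReal_mul, ENNReal.toReal_ofReal (by positivity)]
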